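/- For g(z) = z^2 + z and every natural number j, the polynomial g^{∘j}(z) + 2 has only simple roots, and the polynomial g^{∘n}(z) + 1 has only simple roots. -/
import Mathlib


open Polynomial

noncomputable def gIter : ℕ → Polynomial ℂ
  | 0 => X
  | n + 1 => (gIter n).comp (X ^ 2 + X)

lemma gIter_real (n : ℕ) : ∀ x : ℝ, -1/4 ≤ x → x ≤ 0 →
    ∃ y : ℝ, (gIter n).eval (x : ℂ) = y ∧ -1/4 ≤ y ∧ y ≤ 0 := by
  induction n with
  | zero => intro x h1 h2; exact ⟨x, by simp [gIter], h1, h2⟩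
  | succ n ih =>
    intro x h1 h2
    have key : (gIter (n+1)).eval (x : ℂ) = (gIter n).eval ((x^2 + x : ℝ) : ℂ) := by
      simp [gIter, eval_comp]
    obtain ⟨y, hy, hy1, hy2⟩ := ih (x^2 + x) (by nlinarith) (by nlinarith)
    exact ⟨y, key.trans hy, hy1, hy2⟩

lemma gIter_key (c : ℂ) (hc : c = 1 ∨ c = 2) (n : ℕ) :
    ∀ z : ℂ, (gIter n).eval z = -c → (gIter n).derivative.eval z ≠ 0 := by
  induction n with
  | zero => intro z _; simp [gIter]
  | succ n ih =>
    intro z hz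
    have hd : (gIter (n+1)).derivative.eval z
        = (gIter n).derivative.eval (z^2 + z) * (2*z + 1) := by
      simp [gIter, derivative_comp, eval_comp]
      ring
    have hz' : (gIter n).eval (z^2 + z) = -c := by
      simpa [gIter, eval_comp] using hz
    rw [hd]
    refine mul_ne_zero (ih _ hz') ?_
    intro h
    have hzval : z = -1/2 := by
      have : (2 : ℂ) ≠ 0 := two_ne_zero
      field_simp
      linear_combination h
    have : z^2 + z = ((-1/4 : ℝ) : ℂ) := by rw [hzval]; push_cast; ring
    rw [this] at hz'
    obtain ⟨y, hy, hy1, hy2⟩ := gIter_real n (-1/4) (by norm_num) (by norm_num)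
    rw [hy] at hz'
    have : (y : ℂ) = -c := hz'
    rcases hc with rfl | rfl
    · have : (y : ℂ) = ((-1 : ℝ) : ℂ) := by rw [this]; norm_num
      have hy' : y = -1 := by exact_mod_cast this
      linarith
    · have : (y : ℂ) = ((-2 : ℝ) : ℂ) := by rw [this]; norm_num
      have hy' : y = -2 := by exact_mod_cast this
      linarith

theorem stmt8 (j n : ℕ) :
    (∀ z : ℂ, (gIter j + C 2).eval z = 0 →
        (gIter j + C 2).derivative.eval z ≠ 0) ∧
    (∀ z : ℂ, (gIter n + C 1).eval z = 0 →
        (gIter n + C 1).derivative.eval z ≠ 0) := by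
  constructor
  · intro z hz
    have h1 : (gIter j).eval z = -2 := by
      have := hz; simp [eval_add] at this; linear_combination this
    have := gIter_key 2 (Or.inr rfl) j z h1
    simpa using this
  · intro z hz
    have h1 : (gIter n).eval z = -1 := by
      have := hz; simp [eval_add] at this; linear_combination this
    have := gIter_key 1 (Or.inl rfl) n z h1
    simpa using this
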